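/- If M_n(F;c) is associative and all entries c_{ijk} are nonzero, then c is equivalent to the trivial skew set, i.e. there exist nonzero scalars γ_{ij} with γ_{ii} = 1 such that c_{jkl} = γ_{jk}γ_{kl}γ_{jl}^{-1} for all j,k,l; consequently M_n(F;c) ≅ M_n(F). -/

import Mathlib

open scoped BigOperators TensorProduct

/-- The skew matrix multiplication determined by a skew set `c`:
`(x * y) i l = ∑ j, c i j l * x i j * y j l`. -/
def skewMul {F : Type*} [Field F] {n : ℕ} (c : Fin n → Fin n → Fin n → F)
    (x y : Fin n → Fin n → F) : Fin n → Fin n → F :=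
  fun i l => ∑ j, c i j l * x i j * y j l

/-- The matrix unit `e_{ij}`. -/
def stdE (F : Type*) [Field F] {n : ℕ} (i j : Fin n) : Fin n → Fin n → F :=
  fun a b => if a = i ∧ b = j then 1 else 0

/-- The identity element `1 = e_11 + ⋯ + e_nn`. -/
def skewOne (F : Type*) [Field F] (n : ℕ) : Fin n → Fin n → F :=
  fun a b => if a = b then 1 else 0

/-- A skew set is reduced if `c_{iij} = c_{ijj} = 1`. -/
def IsReduced' {F : Type*} [Field F] {n : ℕ} (c : Fin n → Fin n → Fin n → F) : Prop :=
  ∀ i j : Fin n, c i i j = 1 ∧ c i j j = 1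

/-- The left nucleus of the skew matrix algebra. -/
def lNuc {F : Type*} [Field F] {n : ℕ} (c : Fin n → Fin n → Fin n → F) :
    Set (Fin n → Fin n → F) :=
  {x | ∀ y z, skewMul c (skewMul c x y) z = skewMul c x (skewMul c y z)}

/-- The middle nucleus of the skew matrix algebra. -/
def mNuc {F : Type*} [Field F] {n : ℕ} (c : Fin n → Fin n → Fin n → F) :
    Set (Fin n → Fin n → F) :=
  {x | ∀ y z, skewMul c (skewMul c y x) z = skewMul c y (skewMul c x z)}

/-- The right nucleus of the skew matrix algebra. -/
def rNuc {F : Type*} [Field F] {n : ℕ} (c : Fin n → Fin n → Fin n → F) :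
    Set (Fin n → Fin n → F) :=
  {x | ∀ y z, skewMul c (skewMul c y z) x = skewMul c y (skewMul c z x)}

/-- The nucleus of the skew matrix algebra. -/
def skewNuc {F : Type*} [Field F] {n : ℕ} (c : Fin n → Fin n → Fin n → F) :
    Set (Fin n → Fin n → F) :=
  lNuc c ∩ mNuc c ∩ rNuc c

/-- If `M_n(F;c)` is associative and all entries `c_{ijk}` are nonzero, then `c` is
equivalent to the trivial skew set, and consequently `M_n(F;c) ≅ M_n(F)`. -/

private lemma skew_cocycle {F : Type*} [Field F] {n : ℕ} (c : Fin n → Fin n → Fin n → F)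
    (hassoc : ∀ x y z : Fin n → Fin n → F,
      skewMul c (skewMul c x y) z = skewMul c x (skewMul c y z))
    (i j k l : Fin n) : c i j k * c i k l = c j k l * c i j l := by
  have h := congrFun (congrFun (hassoc (stdE F i j) (stdE F j k) (stdE F k l)) i) l
  simp [skewMul, stdE, Finset.mul_sum, Finset.sum_mul, mul_ite, ite_mul, mul_zero,
    zero_mul, mul_one, one_mul, Finset.sum_ite_eq, Finset.sum_ite_eq'] at h
  linear_combination h

theorem stmt_12 {F : Type*} [Field F] {n : ℕ} (c : Fin n → Fin n → Fin n → F)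
    (hc : IsReduced' c)
    (hassoc : ∀ x y z : Fin n → Fin n → F,
      skewMul c (skewMul c x y) z = skewMul c x (skewMul c y z))
    (hnz : ∀ i j k : Fin n, c i j k ≠ 0) :
    (∃ γ : Fin n → Fin n → F, (∀ i j, γ i j ≠ 0) ∧ (∀ i, γ i i = 1) ∧
      ∀ j k l : Fin n, c j k l = γ j k * γ k l * (γ j l)⁻¹) ∧
    ∃ φ : (Fin n → Fin n → F) ≃ₗ[F] (Fin n → Fin n → F),
      ∀ x y, φ (skewMul c x y) = skewMul (fun _ _ _ => (1 : F)) (φ x) (φ y) := by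
  rcases Nat.eq_zero_or_pos n with hn | hn
  · subst hn
    refine ⟨⟨fun _ _ => 1, fun i => i.elim0, fun i => i.elim0, fun j => j.elim0⟩,
      LinearEquiv.refl F _, fun x y => funext fun i => i.elim0⟩
  · haveI : NeZero n := ⟨hn.ne'⟩
    set γ : Fin n → Fin n → F := fun i j => c 0 i j with hγ
    have hγnz : ∀ i j, γ i j ≠ 0 := fun i j => hnz 0 i j
    have hγdiag : ∀ i, γ i i = 1 := fun i => (hc 0 i).2
    have hrel : ∀ j k l : Fin n, c j k l = γ j k * γ k l * (γ j l)⁻¹ := by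
      intro j k l
      have h := skew_cocycle c hassoc 0 j k l
      simp only [hγ]
      rw [← div_eq_mul_inv, eq_div_iff (hnz 0 j l)]
      linear_combination -h
    refine ⟨⟨γ, hγnz, hγdiag, hrel⟩, ?_⟩
    refine ⟨{ toFun := fun x i j => γ i j * x i j
              invFun := fun x i j => (γ i j)⁻¹ * x i j
              map_add' := fun x y => by funext i j; simp [mul_add]
              map_smul' := fun a x => by funext i j; simp [Pi.smul_apply, smul_eq_mul]; ring
              left_inv := fun x => by
                funext i j; simp [inv_mul_cancel_left₀ (hγnz i j)]
              right_inv := fun x => by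
                funext i j; simp [mul_inv_cancel_left₀ (hγnz i j)] }, ?_⟩
    intro x y
    funext i l
    simp only [LinearEquiv.coe_mk, LinearMap.coe_mk, AddHom.coe_mk, skewMul, Finset.mul_sum]
    refine Finset.sum_congr rfl fun j _ => ?_
    rw [hrel i j l]
    field_simp [hγnz]
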